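/- For a sequence c = (c₀, c₁, c₂, …) of complex numbers, define the formal power series F_c(x) = Σ_{k≥0} k!·( Σ_{n+m=k, n,m≥0} (−1)^n c_n c_m )·x^{k+1} ∈ ℂ[[x]]. Then: (i) for every odd k, the coefficient Σ_{n+m=k} (−1)^n c_n c_m vanishes, so F_c is supported in odd degrees (F_c is an odd formal series with zero constant term); and (ii) conversely, for every formal power series g ∈ ℂ[[x]] all of whose nonzero coefficients are in odd degrees, there exists a sequence c with F_c = g. -/

import Mathlib

noncomputable section

lemma exists_mul_self_eq (z : ℂ) : ∃ w : ℂ, w * w = z := by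
  obtain ⟨w, hw⟩ := IsAlgClosed.exists_pow_nat_eq z (n := 2) (by norm_num)
  exact ⟨w, by rw [← sq]; exact hw⟩

noncomputable def sqrtSeq (u : ℕ → ℂ) : ℕ → ℂ
  | 0 => Classical.choose (exists_mul_self_eq (u 0))
  | j + 1 =>
      (u (j + 1) - ∑ i ∈ (Finset.range j).attach,
          sqrtSeq u (i.1 + 1) * sqrtSeq u (j - i.1)) / (2 * sqrtSeq u 0)
  termination_by j => j
  decreasing_by
  all_goals first
    | (have := i.2; simp only [Finset.mem_range] at this; omega)
    | omega

lemma sqrtSeq_zero_sq (u : ℕ → ℂ) : sqrtSeq u 0 * sqrtSeq u 0 = u 0 := by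
  rw [sqrtSeq]
  exact Classical.choose_spec (exists_mul_self_eq (u 0))

lemma sqrtSeq_conv (u : ℕ → ℂ) (hu : u 0 ≠ 0) (J : ℕ) :
    ∑ i ∈ Finset.range (J + 1), sqrtSeq u i * sqrtSeq u (J - i) = u J := by
  have h0 : sqrtSeq u 0 * sqrtSeq u 0 = u 0 := sqrtSeq_zero_sq u
  have ha0 : sqrtSeq u 0 ≠ 0 := by
    intro h; apply hu; rw [← h0, h, mul_zero]
  cases J with
  | zero => simpa using h0
  | succ j =>
    have hmid : ∑ i ∈ (Finset.range j).attach, sqrtSeq u (i.1 + 1) * sqrtSeq u (j - i.1)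
        = ∑ i ∈ Finset.range j, sqrtSeq u (i + 1) * sqrtSeq u (j - i) :=
      Finset.sum_attach _ (fun i => sqrtSeq u (i + 1) * sqrtSeq u (j - i))
    have hdef := sqrtSeq.eq_2 u j
    rw [hmid] at hdef
    simp only [Nat.succ_eq_add_one] at hdef
    have hcg : ∀ i ∈ Finset.range j,
        sqrtSeq u (i + 1) * sqrtSeq u (j + 1 - (i + 1))
          = sqrtSeq u (i + 1) * sqrtSeq u (j - i) := by
      intro i hi; congr 2; omega
    rw [Finset.sum_range_succ, Finset.sum_range_succ']
    simp only [Nat.sub_self, Nat.add_sub_cancel_left, Nat.zero_sub, Nat.sub_zero]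
    rw [Finset.sum_congr rfl hcg, hdef]
    field_simp
    ring

lemma exists_seq (h : ℕ → ℂ) :
    ∃ c : ℕ → ℂ, ∀ j, ∑ n ∈ Finset.range (2 * j + 1),
      (-1 : ℂ) ^ n * c n * c (2 * j - n) = h j := by
  by_cases hz : ∀ j, h j = 0
  · refine ⟨fun _ => 0, fun j => ?_⟩
    simp [hz j]
  · push_neg at hz
    set m := Nat.find hz with hm
    have hmne : h m ≠ 0 := Nat.find_spec hz
    have hmin : ∀ j < m, h j = 0 := by
      intro j hj
      by_contra hcn
      have h2 : Nat.find hz ≤ j := Nat.find_le hcn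
      omega
    set u : ℕ → ℂ := fun j => (-1 : ℂ) ^ m * h (m + j) with hu
    have hu0 : u 0 ≠ 0 := by
      simp only [hu, add_zero]
      exact mul_ne_zero (by simp [pow_ne_zero]) hmne
    set a := sqrtSeq u with ha
    have hconv : ∀ J, ∑ i ∈ Finset.range (J + 1), a i * a (J - i) = u J :=
      fun J => sqrtSeq_conv u hu0 J
    set c : ℕ → ℂ := fun n => if m ≤ n ∧ (n - m) % 2 = 0 then a ((n - m) / 2) else 0 with hc
    refine ⟨c, fun j => ?_⟩
    rcases lt_or_ge j m with hjm | hjm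
    · rw [hmin j hjm]
      apply Finset.sum_eq_zero
      intro n hn
      simp only [Finset.mem_range] at hn
      rcases lt_or_ge n m with h1 | h1
      · have : c n = 0 := by simp only [hc]; exact if_neg (by omega)
        rw [this]; ring
      · have : c (2 * j - n) = 0 := by simp only [hc]; exact if_neg (by omega)
        rw [this]; ring
    · -- j ≥ m
      set t := (Finset.range (j - m + 1)).image (fun i => m + 2 * i) with ht
      have hsub : t ⊆ Finset.range (2 * j + 1) := by
        intro x hx
        simp only [ht, Finset.mem_image, Finset.mem_range] at hx ⊢
        obtain ⟨i, hi, rfl⟩ := hx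
        omega
      have hvanish : ∀ x ∈ Finset.range (2 * j + 1), x ∉ t →
          (-1 : ℂ) ^ x * c x * c (2 * j - x) = 0 := by
        intro x hx hxt
        simp only [Finset.mem_range] at hx
        by_cases h1 : m ≤ x ∧ (x - m) % 2 = 0
        · by_cases h2 : m ≤ 2 * j - x
          · exfalso
            apply hxt
            simp only [ht, Finset.mem_image, Finset.mem_range]
            exact ⟨(x - m) / 2, by omega, by omega⟩
          · have : c (2 * j - x) = 0 := by simp only [hc]; exact if_neg (by omega)
            rw [this]; ring
        · have : c x = 0 := by simp only [hc]; exact if_neg h1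
          rw [this]; ring
      rw [← Finset.sum_subset hsub hvanish, ht,
        Finset.sum_image (by intro x _ y _ hxy; simp only at hxy; omega)]
      have hterm : ∀ i ∈ Finset.range (j - m + 1),
          (-1 : ℂ) ^ (m + 2 * i) * c (m + 2 * i) * c (2 * j - (m + 2 * i))
            = (-1 : ℂ) ^ m * (a i * a (j - m - i)) := by
        intro i hi
        simp only [Finset.mem_range] at hi
        have e1 : c (m + 2 * i) = a i := by
          simp only [hc]
          rw [if_pos (by omega : m ≤ m + 2 * i ∧ (m + 2 * i - m) % 2 = 0)]
          congr 1
          omega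
        have e2 : c (2 * j - (m + 2 * i)) = a (j - m - i) := by
          simp only [hc]
          rw [if_pos (by omega : m ≤ 2 * j - (m + 2 * i) ∧ (2 * j - (m + 2 * i) - m) % 2 = 0)]
          congr 1
          omega
        have e3 : (-1 : ℂ) ^ (m + 2 * i) = (-1 : ℂ) ^ m := by
          rw [pow_add, pow_mul]
          norm_num
        rw [e1, e2, e3]; ring
      rw [Finset.sum_congr rfl hterm, ← Finset.mul_sum, hconv (j - m)]
      rw [hu]
      simp only
      rw [← mul_assoc, ← pow_add]
      have : (-1 : ℂ) ^ (m + m) = 1 := by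
        have : m + m = 2 * m := by ring
        rw [this, pow_mul]; norm_num
      rw [this, one_mul]
      congr 1
      omega
/-- The formal power series `F_c(x) = Σ_{k≥0} k!·(Σ_{n+m=k} (−1)^n c_n c_m)·x^{k+1}`
associated to a sequence `c` of complex numbers: the exponent of the free `𝔤𝔩₁` R-matrix. -/
def freeExponent (c : ℕ → ℂ) : PowerSeries ℂ :=
  PowerSeries.mk fun d =>
    if d = 0 then 0
    else (Nat.factorial (d - 1) : ℂ) *
      ∑ n ∈ Finset.range d, (-1 : ℂ) ^ n * c n * c (d - 1 - n)

lemma odd_sum_zero (c : ℕ → ℂ) (k : ℕ) (hk : Odd k) :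
    (∑ n ∈ Finset.range (k + 1), (-1 : ℂ) ^ n * c n * c (k - n)) = 0 := by
  set S := ∑ n ∈ Finset.range (k + 1), (-1 : ℂ) ^ n * c n * c (k - n) with hS
  have hrefl := Finset.sum_range_reflect (fun n => (-1 : ℂ) ^ n * c n * c (k - n)) (k + 1)
  simp only [Nat.add_sub_cancel] at hrefl
  have hterm : ∀ n ∈ Finset.range (k + 1),
      (-1 : ℂ) ^ (k - n) * c (k - n) * c (k - (k - n))
        = -((-1 : ℂ) ^ n * c n * c (k - n)) := by
    intro n hn
    simp only [Finset.mem_range] at hn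
    have h1 : k - (k - n) = n := by omega
    have h2 : (-1 : ℂ) ^ (k - n) = -(-1 : ℂ) ^ n := by
      have e : (-1 : ℂ) ^ (k - n) * (-1 : ℂ) ^ n = (-1 : ℂ) ^ k := by
        rw [← pow_add]; congr 1; omega
      have hk1 : (-1 : ℂ) ^ k = -1 := Odd.neg_one_pow hk
      have hsq : (-1 : ℂ) ^ n * (-1 : ℂ) ^ n = 1 := by
        rw [← pow_add, show n + n = 2 * n from by ring, pow_mul]; norm_num
      calc (-1 : ℂ) ^ (k - n) = (-1 : ℂ) ^ (k - n) * ((-1 : ℂ) ^ n * (-1 : ℂ) ^ n) := by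
            rw [hsq, mul_one]
        _ = ((-1 : ℂ) ^ (k - n) * (-1 : ℂ) ^ n) * (-1 : ℂ) ^ n := by ring
        _ = (-1 : ℂ) ^ k * (-1 : ℂ) ^ n := by rw [e]
        _ = -(-1 : ℂ) ^ n := by rw [hk1]; ring
    rw [h1, h2]; ring
  rw [Finset.sum_congr rfl hterm, Finset.sum_neg_distrib] at hrefl
  have h2S : S + S = 0 := by rw [hS]; linear_combination -hrefl
  exact add_self_eq_zero.mp h2S

lemma freeExponent_even_coeff (c : ℕ → ℂ) (d : ℕ) (hd : Even d) :
    PowerSeries.coeff d (freeExponent c) = 0 := by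
  simp only [freeExponent, PowerSeries.coeff_mk]
  rcases Nat.eq_zero_or_pos d with h0 | h0
  · rw [if_pos h0]
  · rw [if_neg (by omega)]
    obtain ⟨k, rfl⟩ : ∃ k, d = k + 1 := ⟨d - 1, by omega⟩
    have hk : Odd k := by
      obtain ⟨r, hr⟩ := hd
      exact ⟨r - 1, by omega⟩
    simp only [Nat.add_sub_cancel]
    rw [odd_sum_zero c k hk, mul_zero]

/-- (i) For every odd `k` the coefficient `Σ_{n+m=k} (−1)^n c_n c_m` vanishes, so `F_c` is an
odd formal series (supported in odd degrees, with zero constant term); and (ii) conversely,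
every formal power series all of whose nonzero coefficients are in odd degrees arises as
`F_c` for some sequence `c`. -/
theorem freeExponent_odd_and_surjective :
    (∀ (c : ℕ → ℂ) (k : ℕ), Odd k →
        (∑ n ∈ Finset.range (k + 1), (-1 : ℂ) ^ n * c n * c (k - n)) = 0) ∧
      (∀ (c : ℕ → ℂ) (d : ℕ), Even d → PowerSeries.coeff d (freeExponent c) = 0) ∧
      (∀ g : PowerSeries ℂ, (∀ d : ℕ, Even d → PowerSeries.coeff d g = 0) →
        ∃ c : ℕ → ℂ, freeExponent c = g) := by
  refine ⟨odd_sum_zero, freeExponent_even_coeff, ?_⟩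
  intro g hg
  set h : ℕ → ℂ := fun j => (PowerSeries.coeff (2 * j + 1) g) / ((2 * j).factorial : ℂ)
    with hh
  obtain ⟨c, hcj⟩ := exists_seq h
  refine ⟨c, PowerSeries.ext fun d => ?_⟩
  rcases Nat.even_or_odd d with hd | hd
  · rw [freeExponent_even_coeff c d hd, hg d hd]
  · obtain ⟨j, rfl⟩ := hd
    simp only [freeExponent, PowerSeries.coeff_mk]
    rw [if_neg (by omega)]
    simp only [Nat.add_sub_cancel]
    rw [hcj j, hh]
    simp only
    have hfac : (((2 * j).factorial : ℕ) : ℂ) ≠ 0 :=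
      Nat.cast_ne_zero.mpr (Nat.factorial_ne_zero _)
    field_simp
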